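/- arXiv:2009.01962 — 6 statements merged into one kernel-verified Lean document; each statement's English description precedes it below -/
import Mathlib

section
/- Let f be analytic on the open unit disk 𝔻, bounded, with Taylor truncation P_n at 0, and let z₀ ∈ 𝔻, z₀ ≠ 0. Then for every R ∈ ℂ and every δ > 0 there exists a bounded analytic function F on 𝔻 whose Taylor series at 0 agrees with P_n up to order n−1 (i.e. F(z) − P_n(z) = O(z^n)) and such that |F(z₀) − R| ≥ |z₀|^n (1 − δ) ‖F‖_∞. -/
open Metric Set Finset Asymptotics

/-- Optimality (lower bound): given the Maclaurin polynomial `P_n` of a bounded analytic `f`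
on the unit disk and `z₀ ≠ 0` in the disk, for every candidate value `R` and every `δ > 0`
there is a bounded analytic `F` with the same Maclaurin polynomial such that
`|F(z₀) − R| ≥ |z₀|^n (1−δ) ‖F‖_∞`. -/
theorem stmt2 (f : ℂ → ℂ)
    (hf : DifferentiableOn ℂ f (ball (0 : ℂ) 1))
    (hfb : BddAbove ((fun z => ‖f z‖) '' ball (0 : ℂ) 1))
    (n : ℕ) (z₀ : ℂ) (hz₀ : z₀ ∈ ball (0 : ℂ) 1) (hz₀0 : z₀ ≠ 0)
    (R : ℂ) (δ : ℝ) (hδ : 0 < δ) :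
    ∃ F : ℂ → ℂ, DifferentiableOn ℂ F (ball (0 : ℂ) 1) ∧
      BddAbove ((fun z => ‖F z‖) '' ball (0 : ℂ) 1) ∧
      (fun z : ℂ =>
          F z - ∑ k ∈ Finset.range n, (iteratedDeriv k f 0 / (k.factorial : ℂ)) * z ^ k)
        =O[nhds 0] (fun z : ℂ => z ^ n) ∧
      ‖F z₀ - R‖ ≥
        ‖z₀‖ ^ n * (1 - δ) *
          sSup ((fun z => ‖F z‖) '' ball (0 : ℂ) 1) := by
  set c : ℕ → ℂ := fun k => iteratedDeriv k f 0 / (k.factorial : ℂ) with hc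
  set P : ℂ → ℂ := fun z => ∑ k ∈ Finset.range n, c k * z ^ k with hP
  set M : ℝ := ∑ k ∈ Finset.range n, ‖c k‖ with hM
  set C : ℝ := ‖P z₀ - R‖ with hC
  have hr : 0 < ‖z₀‖ ^ n := pow_pos (by simpa using hz₀0) n
  set r : ℝ := ‖z₀‖ ^ n with hrdef
  set l : ℝ := max 0 ((C + (1 - δ) * M) / (δ * r)) with hl
  have hl0 : 0 ≤ l := le_max_left _ _
  have hlkey : C + (1 - δ) * M ≤ l * (δ * r) := by
    rcases le_or_gt (C + (1 - δ) * M) 0 with h | h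
    · nlinarith [mul_pos hδ hr]
    · have : (C + (1 - δ) * M) / (δ * r) ≤ l := le_max_right _ _
      rw [div_le_iff₀ (by positivity)] at this
      linarith
  refine ⟨fun z => P z + (l : ℂ) * z ^ n, ?_, ?_, ?_, ?_⟩
  · apply Differentiable.differentiableOn
    fun_prop
  · refine ⟨M + l, ?_⟩
    rintro x ⟨z, hz, rfl⟩
    simp only [mem_ball, Complex.dist_eq, sub_zero] at hz
    have h1 : ‖P z‖ ≤ M := by
      refine (norm_sum_le _ _).trans ?_
      apply Finset.sum_le_sum
      intro k _
      rw [norm_mul, norm_pow]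
      nlinarith [pow_le_one₀ (norm_nonneg z) hz.le (n := k),
        norm_nonneg (c k), pow_nonneg (norm_nonneg z) k]
    have h2 : ‖(l : ℂ) * z ^ n‖ ≤ l := by
      rw [norm_mul, norm_pow, Complex.norm_real, Real.norm_of_nonneg hl0]
      nlinarith [pow_le_one₀ (norm_nonneg z) hz.le (n := n)]
    calc ‖P z + (l : ℂ) * z ^ n‖
        ≤ ‖P z‖ + ‖(l : ℂ) * z ^ n‖ := norm_add_le _ _
      _ ≤ M + l := add_le_add h1 h2
  · have : (fun z : ℂ => (P z + (l : ℂ) * z ^ n) - ∑ k ∈ Finset.range n,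
        (iteratedDeriv k f 0 / (k.factorial : ℂ)) * z ^ k) = fun z => (l : ℂ) * z ^ n := by
      funext z
      simp [hP, hc]
    rw [this]
    exact (isBigO_refl _ _).const_mul_left _
  · have hne : ((fun z => ‖P z + (l : ℂ) * z ^ n‖) '' ball (0 : ℂ) 1).Nonempty :=
      ⟨_, ⟨0, by simp, rfl⟩⟩
    have hbdd : M + l ∈ upperBounds
        ((fun z => ‖P z + (l : ℂ) * z ^ n‖) '' ball (0 : ℂ) 1) := by
      rintro x ⟨z, hz, rfl⟩
      simp only [mem_ball, Complex.dist_eq, sub_zero] at hz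
      have h1 : ‖P z‖ ≤ M := by
        refine (norm_sum_le _ _).trans ?_
        apply Finset.sum_le_sum
        intro k _
        rw [norm_mul, norm_pow]
        nlinarith [pow_le_one₀ (norm_nonneg z) hz.le (n := k),
          norm_nonneg (c k), pow_nonneg (norm_nonneg z) k]
      have h2 : ‖(l : ℂ) * z ^ n‖ ≤ l := by
        rw [norm_mul, norm_pow, Complex.norm_real, Real.norm_of_nonneg hl0]
        nlinarith [pow_le_one₀ (norm_nonneg z) hz.le (n := n)]
      calc ‖P z + (l : ℂ) * z ^ n‖
          ≤ ‖P z‖ + ‖(l : ℂ) * z ^ n‖ := norm_add_le _ _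
        _ ≤ M + l := add_le_add h1 h2
    set S : ℝ := sSup ((fun z => ‖P z + (l : ℂ) * z ^ n‖) '' ball (0 : ℂ) 1) with hS
    have hSle : S ≤ M + l := csSup_le hne hbdd
    have hS0 : 0 ≤ S := by
      have : ‖P 0 + (l : ℂ) * 0 ^ n‖ ≤ S :=
        le_csSup ⟨M + l, hbdd⟩ ⟨0, by simp, rfl⟩
      exact le_trans (norm_nonneg _) this
    have htri : l * r - C ≤ ‖(P z₀ + (l : ℂ) * z₀ ^ n) - R‖ := by
      have h := norm_sub_norm_le ((l : ℂ) * z₀ ^ n) (-(P z₀ - R))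
      have heq : (l : ℂ) * z₀ ^ n - -(P z₀ - R) = (P z₀ + (l : ℂ) * z₀ ^ n) - R := by ring
      rw [heq] at h
      have habs : ‖(l : ℂ) * z₀ ^ n‖ = l * r := by
        simp [norm_mul, norm_pow, Complex.norm_real, abs_of_nonneg hl0, hrdef]
      rw [habs, norm_neg] at h
      simpa [hC] using h
    have hM0 : 0 ≤ M := Finset.sum_nonneg fun k _ => norm_nonneg _
    have hr1 : r ≤ 1 := by
      have : ‖z₀‖ < 1 := by simpa [Complex.dist_eq] using hz₀
      exact pow_le_one₀ (norm_nonneg _) this.le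
    rcases le_or_gt (1 - δ) 0 with h1δ | h1δ
    · have h0 : 0 ≤ r * S * (δ - 1) := mul_nonneg (mul_nonneg hr.le hS0) (by linarith)
      have : r * (1 - δ) * S ≤ 0 := by nlinarith
      exact le_trans this (norm_nonneg _)
    · calc r * (1 - δ) * S ≤ r * (1 - δ) * (M + l) := by
            have := mul_le_mul_of_nonneg_left hSle (mul_nonneg hr.le h1δ.le)
            nlinarith
        _ ≤ l * r - C := by
            nlinarith [hlkey, mul_nonneg (mul_nonneg h1δ.le hM0) (sub_nonneg.2 hr1)]
        _ ≤ _ := htri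
end

section
/- If F and G are analytic on a star-shaped (with respect to 0) open domain 𝒩 ⊆ ℂ containing 0, then the Laplace convolution (F*G)(ω) = ∫₀^ω F(s)G(ω−s) ds (integral along the segment from 0 to ω) is analytic on 𝒩. -/
open Metric Set

/-- Analyticity of Laplace convolution on a star-shaped domain: if `F` and `G` are analytic
on an open set `N ⊆ ℂ` which is star-shaped with respect to `0`, then
`(F*G)(ω) = ∫₀^1 F(tω) G((1−t)ω) ω dt` is analytic on `N`. -/
theorem stmt5 (N : Set ℂ) (hNopen : IsOpen N) (h0N : (0 : ℂ) ∈ N)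
    (hstar : StarConvex ℝ (0 : ℂ) N)
    (F G : ℂ → ℂ)
    (hF : DifferentiableOn ℂ F N) (hG : DifferentiableOn ℂ G N) :
    DifferentiableOn ℂ
      (fun ω : ℂ => ∫ t in (0 : ℝ)..1, F ((t : ℂ) * ω) * G ((1 - (t : ℂ)) * ω) * ω) N := by
  -- continuity of F, G, deriv F, deriv G on N
  have cF : ContinuousOn F N := hF.continuousOn
  have cG : ContinuousOn G N := hG.continuousOn
  have cF' : ContinuousOn (deriv F) N :=
    ((hF.analyticOnNhd hNopen).deriv).continuousOn
  have cG' : ContinuousOn (deriv G) N :=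
    ((hG.analyticOnNhd hNopen).deriv).continuousOn
  intro ω₀ hω₀
  obtain ⟨ε, εpos, hball⟩ : ∃ ε > 0, closedBall ω₀ ε ⊆ N := by
    rcases Metric.isOpen_iff.1 hNopen ω₀ hω₀ with ⟨δ, δpos, hδ⟩
    exact ⟨δ/2, by positivity, (closedBall_subset_ball (by linarith)).trans hδ⟩
  set K : Set ℂ := (fun p : ℝ × ℂ => (p.1 : ℂ) * p.2) '' (Icc (0:ℝ) 1 ×ˢ closedBall ω₀ ε)
    with hKdef
  have hmemK : ∀ t ∈ Icc (0:ℝ) 1, ∀ x ∈ closedBall ω₀ ε, (t : ℂ) * x ∈ K :=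
    fun t ht x hx => ⟨(t, x), ⟨ht, hx⟩, rfl⟩
  have hKcomp : IsCompact K :=
    (isCompact_Icc.prod (isCompact_closedBall _ _)).image
      (Complex.continuous_ofReal.comp continuous_fst |>.mul continuous_snd)
  have hKN : K ⊆ N := by
    rintro z ⟨⟨t, x⟩, ⟨⟨ht0, ht1⟩, hx⟩, rfl⟩
    have := hstar.smul_mem (hball hx) ht0 ht1
    simpa [Complex.real_smul] using this
  -- bounds
  obtain ⟨MF, hMF⟩ := hKcomp.exists_bound_of_continuousOn (cF.mono hKN)
  obtain ⟨MG, hMG⟩ := hKcomp.exists_bound_of_continuousOn (cG.mono hKN)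
  obtain ⟨MF', hMF'⟩ := hKcomp.exists_bound_of_continuousOn (cF'.mono hKN)
  obtain ⟨MG', hMG'⟩ := hKcomp.exists_bound_of_continuousOn (cG'.mono hKN)
  have h0K : (0 : ℂ) ∈ K := by
    simpa using hmemK 0 ⟨le_refl _, zero_le_one⟩ ω₀ (mem_closedBall_self εpos.le)
  have hMF0 : 0 ≤ MF := le_trans (norm_nonneg _) (hMF 0 h0K)
  have hMG0 : 0 ≤ MG := le_trans (norm_nonneg _) (hMG 0 h0K)
  have hMF'0 : 0 ≤ MF' := le_trans (norm_nonneg _) (hMF' 0 h0K)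
  have hMG'0 : 0 ≤ MG' := le_trans (norm_nonneg _) (hMG' 0 h0K)
  set R : ℝ := ‖ω₀‖ + ε with hR
  have hR0 : 0 ≤ R := by positivity
  -- membership helpers
  have hmem1 : ∀ t ∈ Icc (0:ℝ) 1, ∀ x ∈ closedBall ω₀ ε, (1 - (t : ℂ)) * x ∈ K := by
    intro t ht x hx
    have : ((1 - t : ℝ) : ℂ) * x ∈ K :=
      hmemK (1 - t) ⟨by linarith [ht.2], by linarith [ht.1]⟩ x hx
    simpa using this
  -- the derivative of the integrand
  set f' : ℂ → ℝ → ℂ := fun x t =>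
    (deriv F ((t : ℂ) * x) * (t : ℂ) * G ((1 - (t : ℂ)) * x) +
      F ((t : ℂ) * x) * (deriv G ((1 - (t : ℂ)) * x) * (1 - (t : ℂ)))) * x +
    F ((t : ℂ) * x) * G ((1 - (t : ℂ)) * x) * 1 with hf'
  have hIoc : Set.uIoc (0:ℝ) 1 ⊆ Icc (0:ℝ) 1 := by
    rw [Set.uIoc_of_le zero_le_one]; exact Ioc_subset_Icc_self
  -- continuity in t for fixed x in the closed ball
  have contt : ∀ x ∈ closedBall ω₀ ε,
      ContinuousOn (fun t : ℝ => F ((t : ℂ) * x) * G ((1 - (t : ℂ)) * x) * x)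
        (Icc (0:ℝ) 1) := by
    intro x hx
    have c1 : ContinuousOn (fun t : ℝ => F ((t : ℂ) * x)) (Icc (0:ℝ) 1) := by
      apply cF.comp (by fun_prop)
      intro t ht; exact hKN (hmemK t ht x hx)
    have c2 : ContinuousOn (fun t : ℝ => G ((1 - (t : ℂ)) * x)) (Icc (0:ℝ) 1) := by
      apply cG.comp (by fun_prop)
      intro t ht; exact hKN (hmem1 t ht x hx)
    exact (c1.mul c2).mul continuousOn_const
  have hmeas : ∀ᶠ x in nhds ω₀, MeasureTheory.AEStronglyMeasurable
      (fun t : ℝ => F ((t : ℂ) * x) * G ((1 - (t : ℂ)) * x) * x)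
      (MeasureTheory.volume.restrict (Set.uIoc (0:ℝ) 1)) :=
    Filter.eventually_of_mem (ball_mem_nhds ω₀ εpos) (fun x hx =>
      ((contt x (ball_subset_closedBall hx)).mono hIoc).aestronglyMeasurable
        measurableSet_uIoc)
  have hint : IntervalIntegrable
      (fun t : ℝ => F ((t : ℂ) * ω₀) * G ((1 - (t : ℂ)) * ω₀) * ω₀)
      MeasureTheory.volume 0 1 := by
    apply ContinuousOn.intervalIntegrable
    rw [Set.uIcc_of_le zero_le_one]
    exact contt ω₀ (mem_closedBall_self εpos.le)
  have hmeas' : MeasureTheory.AEStronglyMeasurable (f' ω₀)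
      (MeasureTheory.volume.restrict (Set.uIoc (0:ℝ) 1)) := by
    apply ContinuousOn.aestronglyMeasurable _ measurableSet_uIoc
    apply ContinuousOn.mono (s := Icc (0:ℝ) 1) ?_ hIoc
    have hx : ω₀ ∈ closedBall ω₀ ε := mem_closedBall_self εpos.le
    have c1 : ContinuousOn (fun t : ℝ => F ((t : ℂ) * ω₀)) (Icc (0:ℝ) 1) := by
      apply cF.comp (by fun_prop)
      intro t ht; exact hKN (hmemK t ht ω₀ hx)
    have c2 : ContinuousOn (fun t : ℝ => G ((1 - (t : ℂ)) * ω₀)) (Icc (0:ℝ) 1) := by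
      apply cG.comp (by fun_prop)
      intro t ht; exact hKN (hmem1 t ht ω₀ hx)
    have c3 : ContinuousOn (fun t : ℝ => deriv F ((t : ℂ) * ω₀)) (Icc (0:ℝ) 1) := by
      apply cF'.comp (by fun_prop)
      intro t ht; exact hKN (hmemK t ht ω₀ hx)
    have c4 : ContinuousOn (fun t : ℝ => deriv G ((1 - (t : ℂ)) * ω₀)) (Icc (0:ℝ) 1) := by
      apply cG'.comp (by fun_prop)
      intro t ht; exact hKN (hmem1 t ht ω₀ hx)
    rw [hf']
    exact ((((c3.mul (Complex.continuous_ofReal.continuousOn)).mul c2).add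
      (c1.mul (c4.mul (continuousOn_const.sub Complex.continuous_ofReal.continuousOn)))).mul
      continuousOn_const).add ((c1.mul c2).mul continuousOn_const)
  have hbound : ∀ᵐ t ∂MeasureTheory.volume, t ∈ Set.uIoc (0:ℝ) 1 → ∀ x ∈ ball ω₀ ε,
      ‖f' x t‖ ≤ (MF' * MG + MF * MG') * R + MF * MG := by
      filter_upwards with t ht x hx
      have ht' : t ∈ Icc (0:ℝ) 1 := hIoc ht
      have hxc : x ∈ closedBall ω₀ ε := ball_subset_closedBall hx
      have hm1 : (t : ℂ) * x ∈ K := hmemK t ht' x hxc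
      have hm2 : (1 - (t : ℂ)) * x ∈ K := hmem1 t ht' x hxc
      have hb1 : ‖F ((t : ℂ) * x)‖ ≤ MF := hMF _ hm1
      have hb2 : ‖G ((1 - (t : ℂ)) * x)‖ ≤ MG := hMG _ hm2
      have hb3 : ‖deriv F ((t : ℂ) * x)‖ ≤ MF' := hMF' _ hm1
      have hb4 : ‖deriv G ((1 - (t : ℂ)) * x)‖ ≤ MG' := hMG' _ hm2
      have htn : ‖(t : ℂ)‖ ≤ 1 := by
        rw [Complex.norm_real]
        rw [Real.norm_eq_abs, abs_of_nonneg ht'.1]; exact ht'.2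
      have htn' : ‖(1 - (t : ℂ))‖ ≤ 1 := by
        have : (1 - (t : ℂ)) = ((1 - t : ℝ) : ℂ) := by push_cast; ring
        rw [this, Complex.norm_real, Real.norm_eq_abs,
          abs_of_nonneg (by linarith [ht'.2])]
        linarith [ht'.1]
      have hxn : ‖x‖ ≤ R := by
        calc ‖x‖ ≤ ‖ω₀‖ + ‖x - ω₀‖ := by
              simpa using norm_add_le ω₀ (x - ω₀)
          _ ≤ ‖ω₀‖ + ε := by
              have := mem_closedBall_iff_norm.1 hxc
              linarith
      rw [hf']
      have hA : ‖deriv F ((t : ℂ) * x) * (t : ℂ) * G ((1 - (t : ℂ)) * x) +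
          F ((t : ℂ) * x) * (deriv G ((1 - (t : ℂ)) * x) * (1 - (t : ℂ)))‖ ≤
          MF' * MG + MF * MG' := by
        calc _ ≤ ‖deriv F ((t : ℂ) * x) * (t : ℂ) * G ((1 - (t : ℂ)) * x)‖ +
              ‖F ((t : ℂ) * x) * (deriv G ((1 - (t : ℂ)) * x) * (1 - (t : ℂ)))‖ :=
              norm_add_le _ _
          _ = ‖deriv F ((t : ℂ) * x)‖ * ‖(t : ℂ)‖ * ‖G ((1 - (t : ℂ)) * x)‖ +
              ‖F ((t : ℂ) * x)‖ * (‖deriv G ((1 - (t : ℂ)) * x)‖ * ‖(1 - (t : ℂ))‖) := by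
              simp [norm_mul]
          _ ≤ MF' * 1 * MG + MF * (MG' * 1) := by gcongr
          _ = MF' * MG + MF * MG' := by ring
      calc ‖_‖ ≤ ‖(deriv F ((t : ℂ) * x) * (t : ℂ) * G ((1 - (t : ℂ)) * x) +
              F ((t : ℂ) * x) * (deriv G ((1 - (t : ℂ)) * x) * (1 - (t : ℂ)))) * x‖ +
              ‖F ((t : ℂ) * x) * G ((1 - (t : ℂ)) * x) * 1‖ := norm_add_le _ _
        _ = ‖deriv F ((t : ℂ) * x) * (t : ℂ) * G ((1 - (t : ℂ)) * x) +
              F ((t : ℂ) * x) * (deriv G ((1 - (t : ℂ)) * x) * (1 - (t : ℂ)))‖ * ‖x‖ +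
              ‖F ((t : ℂ) * x)‖ * ‖G ((1 - (t : ℂ)) * x)‖ := by
              simp [norm_mul]
        _ ≤ (MF' * MG + MF * MG') * R + MF * MG := by gcongr
  have hdiff : ∀ᵐ t ∂MeasureTheory.volume, t ∈ Set.uIoc (0:ℝ) 1 → ∀ x ∈ ball ω₀ ε,
      HasDerivAt (fun y : ℂ => F ((t : ℂ) * y) * G ((1 - (t : ℂ)) * y) * y) (f' x t) x := by
      filter_upwards with t ht x hx
      have ht' : t ∈ Icc (0:ℝ) 1 := hIoc ht
      have hxc : x ∈ closedBall ω₀ ε := ball_subset_closedBall hx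
      have hN1 : (t : ℂ) * x ∈ N := hKN (hmemK t ht' x hxc)
      have hN2 : (1 - (t : ℂ)) * x ∈ N := hKN (hmem1 t ht' x hxc)
      have dF : HasDerivAt F (deriv F ((t : ℂ) * x)) ((t : ℂ) * x) :=
        (hF.differentiableAt (hNopen.mem_nhds hN1)).hasDerivAt
      have dG : HasDerivAt G (deriv G ((1 - (t : ℂ)) * x)) ((1 - (t : ℂ)) * x) :=
        (hG.differentiableAt (hNopen.mem_nhds hN2)).hasDerivAt
      have l1 : HasDerivAt (fun y : ℂ => (t : ℂ) * y) ((t : ℂ)) x := by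
        simpa using (hasDerivAt_id x).const_mul ((t : ℂ))
      have l2 : HasDerivAt (fun y : ℂ => (1 - (t : ℂ)) * y) ((1 - (t : ℂ))) x := by
        simpa using (hasDerivAt_id x).const_mul ((1 - (t : ℂ)))
      have h1 : HasDerivAt (fun y : ℂ => F ((t : ℂ) * y))
          (deriv F ((t : ℂ) * x) * (t : ℂ)) x := dF.comp x l1
      have h2 : HasDerivAt (fun y : ℂ => G ((1 - (t : ℂ)) * y))
          (deriv G ((1 - (t : ℂ)) * x) * (1 - (t : ℂ))) x := dG.comp x l2
      have := (h1.mul h2).mul (hasDerivAt_id x)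
      exact this
  have key := intervalIntegral.hasDerivAt_integral_of_dominated_loc_of_deriv_le
    (ball_mem_nhds ω₀ εpos) hmeas hint hmeas' hbound intervalIntegrable_const hdiff
  exact key.2.differentiableAt.differentiableWithinAt
end

section
/- Let Φ : 𝔻 → ℂ be an injective analytic map (conformal onto its image 𝒟 = Φ(𝔻)) with Φ(0) = 0 and c = Φ'(0) > 0, and assume Φ(z) ≠ 0 for z ∈ 𝔻 \ {0}. Then for each n ≥ 1 the function Φ_n(z) := (Φ(z^n))^{1/n}, defined by the branch with Φ_n(z) = c^{1/n} z (1 + o(1)) near 0, extends to an analytic injective map on 𝔻 whose image is ⋃_{j=0}^{n-1} e^{2πij/n} 𝒟^{1/n}. -/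
set_option maxHeartbeats 1000000

open Metric Set Asymptotics FormalMultilinearSeries NNReal ENNReal

lemma aux_exists_primitive (q : ℂ → ℂ) (hq : DifferentiableOn ℂ q (ball (0:ℂ) 1)) :
    ∃ F : ℂ → ℂ, F 0 = 0 ∧ ∀ z ∈ ball (0:ℂ) 1, HasDerivAt F (q z) z := by
  set p := cauchyPowerSeries q 0 (1/2 : ℝ≥0) with hpdef
  have hpr : ∀ r : ℝ≥0, 0 < r → (r:ℝ) < 1 → HasFPowerSeriesOnBall q p 0 r := by
    intro r hr0 hr1
    have hsub : closedBall (0:ℂ) r ⊆ ball (0:ℂ) 1 := by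
      intro x hx
      simp only [mem_closedBall, mem_ball, dist_zero_right] at hx ⊢
      exact lt_of_le_of_lt hx hr1
    have h := (hq.mono hsub).hasFPowerSeriesOnBall hr0
    have hhalf : HasFPowerSeriesOnBall q p 0 (1/2 : ℝ≥0) := by
      have hsub2 : closedBall (0:ℂ) ((1/2 : ℝ≥0) : ℝ) ⊆ ball (0:ℂ) 1 := by
        intro x hx
        simp only [mem_closedBall, mem_ball, dist_zero_right] at hx ⊢
        refine lt_of_le_of_lt hx ?_
        norm_num
      exact (hq.mono hsub2).hasFPowerSeriesOnBall (by norm_num)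
    have heq : cauchyPowerSeries q 0 r = p :=
      h.hasFPowerSeriesAt.eq_formalMultilinearSeries hhalf.hasFPowerSeriesAt
    rwa [heq] at h
  set a : ℕ → ℂ := fun k => p k (fun _ => 1) with hadef
  set b : ℕ → ℂ := fun k => Nat.casesOn k 0 (fun m => a m / (m + 1)) with hbdef
  set P : FormalMultilinearSeries ℂ ℂ ℂ := ofScalars ℂ b with hPdef
  have hp1 : (1 : ℝ≥0∞) ≤ p.radius := by
    apply ENNReal.le_of_forall_nnreal_lt
    intro r hr
    rcases eq_or_lt_of_le (zero_le : (0:ℝ≥0) ≤ r) with h0 | h0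
    · simp [← h0]
    · exact ((hpr r h0 (by exact_mod_cast hr)).r_le)
  have hP1 : (1 : ℝ≥0∞) ≤ P.radius := by
    apply ENNReal.le_of_forall_nnreal_lt
    intro r hr
    have hrR : (r : ℝ≥0∞) < p.radius := lt_of_lt_of_le hr hp1
    obtain ⟨C, hC0, hC⟩ := p.norm_mul_pow_le_of_lt_radius hrR
    have hr1 : (r : ℝ) ≤ 1 := by exact_mod_cast (le_of_lt (by exact_mod_cast hr : r < 1))
    apply P.le_radius_of_bound C
    intro k
    have hnorm : ∀ m, ‖P m‖ = ‖b m‖ := fun m => ofScalars_norm ℂ b m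
    cases k with
    | zero => simpa [hnorm 0, hbdef] using hC0.le
    | succ m =>
      have ha : ‖a m‖ ≤ ‖p m‖ := by
        calc ‖a m‖ = ‖p m (fun _ => (1:ℂ))‖ := rfl
          _ ≤ ‖p m‖ * ∏ _i : Fin m, ‖(1:ℂ)‖ := (p m).le_opNorm _
          _ = ‖p m‖ := by simp
      have hb : ‖b (m+1)‖ ≤ ‖a m‖ := by
        have h1 : (1:ℝ) ≤ ‖((m:ℂ) + 1)‖ := by
          rw [show ((m:ℂ)+1) = ((m+1 : ℕ) : ℂ) by push_cast; ring]
          simp only [Complex.norm_natCast]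
          exact_mod_cast Nat.one_le_iff_ne_zero.2 (Nat.succ_ne_zero m)
        show ‖a m / ((m:ℂ)+1)‖ ≤ ‖a m‖
        rw [norm_div]
        exact div_le_self (norm_nonneg _) h1
      calc ‖P (m+1)‖ * (r:ℝ) ^ (m+1)
            ≤ ‖p m‖ * ((r:ℝ) ^ m * (r:ℝ)) := by
            rw [hnorm, pow_succ]
            exact mul_le_mul (hb.trans ha) le_rfl (by positivity) (norm_nonneg _)
        _ ≤ ‖p m‖ * ((r:ℝ) ^ m * 1) :=
            mul_le_mul le_rfl (mul_le_mul le_rfl hr1 r.coe_nonneg (by positivity))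
              (by positivity) (norm_nonneg _)
        _ = ‖p m‖ * (r:ℝ) ^ m := by ring
        _ ≤ C := hC m
  have hF : HasFPowerSeriesOnBall P.sum P 0 1 :=
    (P.hasFPowerSeriesOnBall (lt_of_lt_of_le one_pos hP1)).mono one_pos hP1
  refine ⟨P.sum, ?_, ?_⟩
  · have h := hF.coeff_zero (fun _ => 1)
    have : P 0 (fun _ => (1:ℂ)) = 0 := by simp [hPdef, hbdef, ofScalars]
    rw [this] at h
    exact h.symm
  · intro z hz
    rw [mem_ball, dist_zero_right] at hz
    have hzball : z ∈ Metric.eball (0:ℂ) 1 := by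
      rw [Metric.mem_eball, edist_zero_right, ← ENNReal.coe_one]
      exact_mod_cast hz
    have hdF : HasFPowerSeriesOnBall (fderiv ℂ P.sum) P.derivSeries 0 1 := hF.fderiv
    have hsum1 : HasSum (fun k => P.derivSeries k (fun _ => z)) (fderiv ℂ P.sum z) := by
      have h := hdF.hasSum hzball
      rwa [zero_add] at h
    have hsum2 := (ContinuousLinearMap.apply ℂ ℂ (1:ℂ)).hasSum hsum1
    simp only [ContinuousLinearMap.apply_apply] at hsum2
    have hterm : ∀ k, (P.derivSeries.coeff k) (1:ℂ) = a k := by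
      intro k
      have h3 := P.derivSeries_apply_diag k (1:ℂ)
      have h4 : P (k+1) (fun _ => (1:ℂ)) = b (k+1) := by simp [hPdef, ofScalars]
      have h6 : ((k:ℂ)+1) ≠ 0 := Nat.cast_add_one_ne_zero k
      have h5 : b (k+1) = a k / ((k:ℂ)+1) := rfl
      calc (P.derivSeries.coeff k) (1:ℂ) = P.derivSeries k (fun _ => (1:ℂ)) 1 := rfl
        _ = (k+1) • P (k+1) (fun _ => (1:ℂ)) := h3
        _ = ((k:ℂ)+1) * (a k / ((k:ℂ)+1)) := by rw [h4, h5]; push_cast; ring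
        _ = a k := by field_simp
    have hsum3 : HasSum (fun k => a k * z ^ k) (deriv P.sum z) := by
      simpa [hterm, mul_comm] using hsum2
    obtain ⟨r, hzr, hr1⟩ : ∃ r : ℝ≥0, ‖z‖ < r ∧ (r:ℝ) < 1 := by
      refine ⟨NNReal.mk ((‖z‖+1)/2) (by positivity), ?_, ?_⟩ <;>
        simp only [NNReal.coe_mk] <;> linarith
    have hr0 : 0 < r := NNReal.coe_pos.mp (lt_of_le_of_lt (norm_nonneg z) hzr)
    have hzball' : z ∈ Metric.eball (0:ℂ) r := by
      rw [Metric.mem_eball, edist_zero_right]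
      exact_mod_cast hzr
    have hqsum : HasSum (fun k => a k * z ^ k) (q z) := by
      have h := (hpr r hr0 hr1).hasSum hzball'
      simp only [zero_add] at h
      have hterm' : ∀ k, p k (fun _ => z) = a k * z ^ k := by
        intro k
        have h1 : (fun _ : Fin k => z) = (fun i : Fin k => z • (fun _ : Fin k => (1:ℂ)) i) := by
          funext i; simp
        rw [h1, ContinuousMultilinearMap.map_smul_univ]
        simp [hadef, mul_comm]
      simpa [hterm'] using h
    have heq : deriv P.sum z = q z := hsum3.unique hqsum
    have hdiff : DifferentiableAt ℂ P.sum z := by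
      apply hF.differentiableOn.differentiableAt (IsOpen.mem_nhds Metric.isOpen_eball hzball)
    have hd := hdiff.hasDerivAt
    rwa [heq] at hd

lemma aux_exists_log (g : ℂ → ℂ) (hg : DifferentiableOn ℂ g (ball (0:ℂ) 1))
    (hne : ∀ z ∈ ball (0:ℂ) 1, g z ≠ 0) :
    ∃ F : ℂ → ℂ, F 0 = 0 ∧ DifferentiableOn ℂ F (ball (0:ℂ) 1) ∧
      (∀ z ∈ ball (0:ℂ) 1, ContinuousAt F z) ∧
      ∀ z ∈ ball (0:ℂ) 1, g z = g 0 * Complex.exp (F z) := by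
  have hg' : DifferentiableOn ℂ (deriv g) (ball (0:ℂ) 1) :=
    ((hg.analyticOnNhd isOpen_ball).deriv).differentiableOn
  have hq : DifferentiableOn ℂ (fun z => deriv g z / g z) (ball (0:ℂ) 1) :=
    hg'.div hg hne
  obtain ⟨F, hF0, hFd⟩ := aux_exists_primitive _ hq
  have hFdiff : DifferentiableOn ℂ F (ball (0:ℂ) 1) := fun z hz =>
    ((hFd z hz).differentiableAt).differentiableWithinAt
  have hconst : ∀ z ∈ ball (0:ℂ) 1, g z * Complex.exp (-F z) = g 0 := by
    have hu : ∀ z ∈ ball (0:ℂ) 1,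
        HasDerivAt (fun w => g w * Complex.exp (-F w)) 0 z := by
      intro z hz
      have hgz : HasDerivAt g (deriv g z) z :=
        (hg.differentiableAt (isOpen_ball.mem_nhds hz)).hasDerivAt
      have hFz : HasDerivAt F (deriv g z / g z) z := hFd z hz
      have hexp : HasDerivAt (fun w => Complex.exp (-F w))
          (Complex.exp (-F z) * (-(deriv g z / g z))) z := by
        have := (hFz.neg).cexp
        simpa using this
      have := hgz.mul hexp
      refine (this : HasDerivAt (fun w => g w * Complex.exp (-F w)) _ z).congr_deriv ?_
      have hgne := hne z hz
      field_simp
      ring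
    intro z hz
    have := Convex.is_const_of_fderivWithin_eq_zero (convex_ball (0:ℂ) 1)
      (fun w hw => ((hu w hw).differentiableAt).differentiableWithinAt)
      (fun w hw => ?_) hz (mem_ball_self one_pos)
    · simpa [hF0] using this
    · have h1 : fderiv ℂ (fun w => g w * Complex.exp (-F w)) w = 0 := by
        have := (hu w hw).hasFDerivAt
        rw [this.fderiv]
        ext v
        simp
      rw [fderivWithin_of_isOpen isOpen_ball hw, h1]
  refine ⟨F, hF0, hFdiff, fun z hz =>
    (hFdiff.differentiableAt (isOpen_ball.mem_nhds hz)).continuousAt, fun z hz => ?_⟩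
  have h := hconst z hz
  have : Complex.exp (-F z) ≠ 0 := Complex.exp_ne_zero _
  field_simp [Complex.exp_neg] at h ⊢
  rw [← h, mul_assoc, ← Complex.exp_add, neg_add_cancel, Complex.exp_zero, mul_one]

/-- The `n`-fold symmetrization lemma: if `Φ` is an injective analytic map of the unit disk
with `Φ(0) = 0`, `Φ'(0) = c > 0`, nonvanishing away from `0`, then `Φₙ(z) = (Φ(zⁿ))^{1/n}`
(with the branch `Φₙ(z) = c^{1/n} z (1+o(1))` near `0`) is a well-defined analytic injective
map of the disk whose image is the union of the `n` rotated copies of `𝒟^{1/n}`,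
i.e. `{w : wⁿ ∈ 𝒟}`. -/
theorem stmt8 (Φ : ℂ → ℂ) (c : ℝ) (hc : 0 < c)
    (hΦ : DifferentiableOn ℂ Φ (ball (0 : ℂ) 1))
    (hinj : Set.InjOn Φ (ball (0 : ℂ) 1))
    (h0 : Φ 0 = 0) (hderiv : deriv Φ 0 = (c : ℂ))
    (hne : ∀ z ∈ ball (0 : ℂ) 1, z ≠ 0 → Φ z ≠ 0)
    (n : ℕ) (hn : 1 ≤ n) :
    ∃ Φn : ℂ → ℂ,
      DifferentiableOn ℂ Φn (ball (0 : ℂ) 1) ∧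
      Set.InjOn Φn (ball (0 : ℂ) 1) ∧
      (∀ z ∈ ball (0 : ℂ) 1, Φn z ^ n = Φ (z ^ n)) ∧
      (fun z : ℂ => Φn z - ((c ^ ((1 : ℝ) / n) : ℝ) : ℂ) * z) =o[nhds 0] (fun z : ℂ => z) ∧
      Φn '' ball (0 : ℂ) 1 = {w : ℂ | w ^ n ∈ Φ '' ball (0 : ℂ) 1} := by
  have hn0 : n ≠ 0 := by omega
  have hnC : ((n:ℂ)) ≠ 0 := Nat.cast_ne_zero.mpr hn0
  set g := dslope Φ 0 with hgdef
  have hgd : DifferentiableOn ℂ g (ball (0:ℂ) 1) :=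
    (Complex.differentiableOn_dslope (isOpen_ball.mem_nhds (mem_ball_self one_pos))).mpr hΦ
  have hg0 : g 0 = (c : ℂ) := by rw [hgdef, dslope_same, hderiv]
  have hΦeq : ∀ z : ℂ, Φ z = z * g z := by
    intro z
    rcases eq_or_ne z 0 with rfl | hz
    · simp [h0]
    · rw [hgdef, dslope_of_ne Φ hz, slope_def_field, h0]
      field_simp
      ring
  have hgne : ∀ z ∈ ball (0:ℂ) 1, g z ≠ 0 := by
    intro z hz
    rcases eq_or_ne z 0 with rfl | hz0
    · rw [hg0]; exact_mod_cast hc.ne'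
    · intro hgz
      exact hne z hz hz0 (by rw [hΦeq z, hgz, mul_zero])
  obtain ⟨F, hF0, hFdiff, hFcont, hgF⟩ := aux_exists_log g hgd hgne
  set m : ℂ := ((c ^ ((1:ℝ)/n) : ℝ) : ℂ) with hmdef
  have hmpos : (0:ℝ) < c ^ ((1:ℝ)/n) := Real.rpow_pos_of_pos hc _
  have hm0 : m ≠ 0 := by rw [hmdef]; exact_mod_cast hmpos.ne'
  have hmn : m ^ n = (c : ℂ) := by
    rw [hmdef, ← Complex.ofReal_pow]
    congr 1
    rw [← Real.rpow_natCast (c ^ ((1:ℝ)/n)) n, ← Real.rpow_mul hc.le]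
    rw [one_div, inv_mul_cancel₀ (by exact_mod_cast hn0 : (n:ℝ) ≠ 0), Real.rpow_one]
  set h : ℂ → ℂ := fun w => m * Complex.exp (F w / n) with hhdef
  have hhne : ∀ w, h w ≠ 0 := fun w => mul_ne_zero hm0 (Complex.exp_ne_zero _)
  have hh : ∀ w ∈ ball (0:ℂ) 1, h w ^ n = g w := by
    intro w hw
    rw [hhdef]
    simp only
    rw [mul_pow, hmn, ← Complex.exp_nat_mul, mul_div_cancel₀ _ hnC, ← hg0, ← hgF w hw]
  set Φn : ℂ → ℂ := fun z => z * h (z ^ n) with hΦndef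
  have hΦn : ∀ z, Φn z = z * h (z ^ n) := fun _ => rfl
  have hmap : ∀ z ∈ ball (0:ℂ) 1, z ^ n ∈ ball (0:ℂ) 1 := by
    intro z hz
    rw [mem_ball_zero_iff] at hz ⊢
    rw [norm_pow]
    exact pow_lt_one₀ (norm_nonneg z) hz hn0
  have hΦnval : ∀ z ∈ ball (0:ℂ) 1, Φn z ^ n = Φ (z ^ n) := by
    intro z hz
    rw [hΦn, mul_pow, hh _ (hmap z hz), ← hΦeq]
  refine ⟨Φn, ?_, ?_, hΦnval, ?_, ?_⟩
  · -- differentiability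
    have hpow : DifferentiableOn ℂ (fun z : ℂ => z ^ n) (ball (0:ℂ) 1) :=
      (differentiable_pow n).differentiableOn
    have hFcomp : DifferentiableOn ℂ (fun z : ℂ => F (z ^ n)) (ball (0:ℂ) 1) :=
      hFdiff.comp hpow hmap
    have : DifferentiableOn ℂ (fun z : ℂ => h (z ^ n)) (ball (0:ℂ) 1) := by
      exact ((hFcomp.div_const (n:ℂ)).cexp).const_mul m
    exact differentiableOn_id.mul this
  · -- injectivity
    intro z hz v hv he
    have h1 : Φ (z ^ n) = Φ (v ^ n) := by
      rw [← hΦnval z hz, ← hΦnval v hv, he]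
    have h2 : z ^ n = v ^ n := hinj (hmap z hz) (hmap v hv) h1
    rw [hΦn, hΦn, ← h2] at he
    exact mul_right_cancel₀ (hhne _) he
  · -- littleO
    have htend : Filter.Tendsto (fun z : ℂ => h (z ^ n) - m) (nhds 0) (nhds 0) := by
      have hc1 : ContinuousAt h 0 := by
        have : ContinuousAt F 0 := hFcont 0 (mem_ball_self one_pos)
        exact (continuousAt_const.mul ((this.div_const _).cexp))
      have hc2 : ContinuousAt (fun z : ℂ => h (z ^ n)) 0 := by
        have hFc : ContinuousAt F ((0:ℂ) ^ n) := by
          rw [zero_pow hn0]; exact hFcont 0 (mem_ball_self one_pos)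
        have hFc2 : ContinuousAt (fun z : ℂ => F (z ^ n)) 0 :=
          ContinuousAt.comp (x := (0:ℂ)) hFc ((continuous_pow n).continuousAt)
        exact continuousAt_const.mul (((hFc2.div_const _).cexp))
      have h00 : h ((0:ℂ) ^ n) = m := by
        rw [zero_pow hn0, hhdef]
        simp [hF0]
      have := hc2.tendsto
      rw [h00] at this
      simpa using this.sub_const m
    have hO : (fun z : ℂ => z) =O[nhds 0] (fun z : ℂ => z) := isBigO_refl _ _
    have hlo := ((Asymptotics.isLittleO_one_iff ℂ).mpr htend).mul_isBigO hO
    have heqf : (fun z : ℂ => Φn z - m * z) = fun z : ℂ => (h (z ^ n) - m) * z := by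
      funext z
      rw [hΦn]
      ring
    rw [heqf]
    simpa using hlo
  · -- image
    ext w
    simp only [mem_image, mem_setOf_eq]
    constructor
    · rintro ⟨z, hz, rfl⟩
      exact ⟨z ^ n, hmap z hz, (hΦnval z hz).symm⟩
    · rintro ⟨u, hu, huw⟩
      obtain ⟨z, hzn⟩ := IsAlgClosed.exists_pow_nat_eq u (Nat.pos_of_ne_zero hn0)
      have hz : z ∈ ball (0:ℂ) 1 := by
        rw [mem_ball_zero_iff]
        rw [mem_ball_zero_iff] at hu
        have : ‖z‖ ^ n < 1 := by rw [← norm_pow, hzn]; exact hu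
        exact (pow_lt_one_iff_of_nonneg (norm_nonneg z) hn0).mp this
      rcases eq_or_ne w 0 with rfl | hw0
      · have hu0 : u = 0 := by
          by_contra hu0
          exact hne u hu hu0 (by rw [huw, zero_pow hn0])
        refine ⟨0, mem_ball_self one_pos, by rw [hΦn]; ring⟩
      · have hΦu0 : Φ u ≠ 0 := by rw [huw]; exact pow_ne_zero n hw0
        have hu0 : u ≠ 0 := fun h' => hΦu0 (h' ▸ h0)
        have hz0 : z ≠ 0 := by
          intro h'
          apply hu0
          rw [← hzn, h', zero_pow hn0]
        have hΦnz : Φn z ≠ 0 := by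
          rw [hΦn]
          exact mul_ne_zero hz0 (hhne _)
        have hpow : Φn z ^ n = w ^ n := by
          rw [hΦnval z hz, hzn, huw]
        set ζ : ℂ := w / Φn z with hζdef
        have hζn : ζ ^ n = 1 := by
          rw [hζdef, div_pow, hpow, div_self (pow_ne_zero n hw0)]
        have hζabs : ‖ζ‖ = 1 := by
          have h1 : ‖ζ‖ ^ n = 1 := by rw [← norm_pow, hζn, norm_one]
          rcases lt_trichotomy ‖ζ‖ 1 with hlt | heq | hgt
          · exact absurd h1 (by
              have := pow_lt_one₀ (norm_nonneg ζ) hlt hn0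
              linarith)
          · exact heq
          · exact absurd h1 (by
              have := one_lt_pow₀ hgt hn0
              linarith)
        refine ⟨ζ * z, ?_, ?_⟩
        · rw [mem_ball_zero_iff, norm_mul, hζabs, one_mul]
          exact mem_ball_zero_iff.mp hz
        · rw [hΦn, mul_pow, hζn, one_mul]
          rw [hζdef]
          field_simp
          rw [hΦn]
end

section
/- Let f be analytic in the unit disk with f(z) = c z (1 + o(z)) as z → 0, c ≠ 0, and f nonvanishing on 𝔻_r(0)\{0} for some 0 < r < 1. Then for an appropriate branch, f(z^n)^{1/n} → z uniformly on compact subsets of 𝔻_r(0) as n → ∞. -/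
open Metric Set Filter

/-- The key limit of the Landen-type iteration: if `f` is analytic on the unit disk with
`f(z) = cz(1+o(z))`, `c ≠ 0`, and `f` is nonvanishing on the punctured disk of radius
`r < 1`, then for the branch `f(zⁿ)^{1/n} = |c|^{1/n} z (f(zⁿ)/(c zⁿ))^{1/n}` (principal
branch) one has `f(zⁿ)^{1/n} → z` uniformly on compact subsets of the disk of radius `r`. -/
theorem stmt9 (f : ℂ → ℂ) (c : ℂ) (hc : c ≠ 0)
    (hf : DifferentiableOn ℂ f (ball (0 : ℂ) 1))
    (h0 : f 0 = 0) (hderiv : deriv f 0 = c)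
    (r : ℝ) (hr0 : 0 < r) (hr1 : r < 1)
    (hne : ∀ z ∈ ball (0 : ℂ) r, z ≠ 0 → f z ≠ 0) :
    ∀ K ⊆ ball (0 : ℂ) r, IsCompact K →
      TendstoUniformlyOn
        (fun (n : ℕ) (z : ℂ) =>
          (((‖c‖ : ℝ) : ℂ) ^ ((1 : ℂ) / n)) * z *
            ((f (z ^ n) / (c * z ^ n)) ^ ((1 : ℂ) / n)))
        (fun z => z) atTop K := by
  intro K hK hKc
  rcases K.eq_empty_or_nonempty with hKe | hKne
  · subst hKe; exact tendstoUniformlyOn_empty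
  obtain ⟨z₀, hz₀K, hz₀max'⟩ := hKc.exists_isMaxOn hKne continuous_norm.continuousOn
  have hz₀max : ∀ z ∈ K, ‖z‖ ≤ ‖z₀‖ := fun z hz => hz₀max' hz
  set ρ := ‖z₀‖ with hρ
  have hρ0 : 0 ≤ ρ := norm_nonneg z₀
  have hρr : ρ < r := by simpa [Complex.dist_eq] using hK hz₀K
  have hρ1 : ρ < 1 := hρr.trans hr1
  have hKsub : K ⊆ closedBall 0 ρ := fun z hz => by
    simpa [Complex.dist_eq] using hz₀max z hz
  have hsubr : closedBall (0:ℂ) ρ ⊆ ball 0 r := fun w hw => by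
    simp only [mem_closedBall, mem_ball, Complex.dist_eq, sub_zero] at *
    linarith
  have hsub1 : closedBall (0:ℂ) ρ ⊆ ball 0 1 := hsubr.trans (fun w hw => by
    simp only [mem_ball, Complex.dist_eq, sub_zero] at *; linarith)
  set g : ℂ → ℂ := fun w => dslope f 0 w / c with hgdef
  have hg0 : g 0 = 1 := by simp [hgdef, hderiv, div_self hc]
  have hgval : ∀ w : ℂ, w ≠ 0 → g w = f w / (c * w) := by
    intro w hw
    simp only [hgdef, dslope_of_ne f hw, slope_def_field, h0, sub_zero]
    rw [div_div, mul_comm]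
  have hgne : ∀ w ∈ closedBall (0:ℂ) ρ, g w ≠ 0 := by
    intro w hw
    by_cases hw0 : w = 0
    · rw [hw0, hg0]; exact one_ne_zero
    · rw [hgval w hw0]
      exact div_ne_zero (hne w (hsubr hw) hw0) (mul_ne_zero hc hw0)
  have hgcont : ContinuousOn g (closedBall 0 ρ) := by
    have : ContinuousOn (dslope f 0) (closedBall 0 ρ) := by
      intro w hw
      by_cases hw0 : w = 0
      · subst hw0
        exact ((continuousAt_dslope_same).mpr
          (hf.differentiableAt (isOpen_ball.mem_nhds (hsub1 hw)))).continuousWithinAt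
      · have hfc : ContinuousAt f w :=
          (hf.differentiableAt (isOpen_ball.mem_nhds (hsub1 hw))).continuousAt
        have : ContinuousAt (dslope f 0) w := by
          have heq : (fun x : ℂ => (f x - f 0) / (x - 0)) =ᶠ[nhds w] dslope f 0 := by
            filter_upwards [isOpen_ne.mem_nhds hw0] with x hx
            rw [dslope_of_ne f hx, slope_def_field]
          refine ContinuousAt.congr ?_ heq
          exact ((hfc.sub continuousAt_const).div
            (continuousAt_id.sub continuousAt_const) (by simpa using hw0))
        exact this.continuousWithinAt
    exact this.div_const c
  have hcb : IsCompact (closedBall (0:ℂ) ρ) := isCompact_closedBall _ _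
  have hne0 : (closedBall (0:ℂ) ρ).Nonempty := ⟨0, by simp [hρ0]⟩
  have habscont : ContinuousOn (fun w => ‖g w‖) (closedBall 0 ρ) :=
    continuous_norm.comp_continuousOn hgcont
  obtain ⟨wM, hwM, hM'⟩ := hcb.exists_isMaxOn hne0 habscont
  obtain ⟨wm, hwm, hm'⟩ := hcb.exists_isMinOn hne0 habscont
  have hM : ∀ w ∈ closedBall (0:ℂ) ρ, ‖g w‖ ≤ ‖g wM‖ := fun w hw => hM' hw
  have hm : ∀ w ∈ closedBall (0:ℂ) ρ, ‖g wm‖ ≤ ‖g w‖ := fun w hw => hm' hw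
  set M := ‖g wM‖ with hMdef
  set m := ‖g wm‖ with hmdef
  have hm0 : 0 < m := by
    rw [hmdef]
    exact (norm_pos_iff.mpr (hgne wm hwm))
  set C : ℝ := max |Real.log m| |Real.log M| + Real.pi with hCdef
  have hlogbound : ∀ w ∈ closedBall (0:ℂ) ρ, ‖Complex.log (g w)‖ ≤ C := by
    intro w hw
    have h1 : ‖Complex.log (g w)‖ ≤
        |(Complex.log (g w)).re| + |(Complex.log (g w)).im| :=
      Complex.norm_le_abs_re_add_abs_im _
    have hre : (Complex.log (g w)).re = Real.log (‖g w‖) := Complex.log_re _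
    have him : |(Complex.log (g w)).im| ≤ Real.pi := by
      rw [Complex.log_im]
      exact Complex.abs_arg_le_pi _
    have hlm : Real.log m ≤ Real.log (‖g w‖) :=
      Real.log_le_log hm0 (hm w hw)
    have hlM : Real.log (‖g w‖) ≤ Real.log M :=
      Real.log_le_log (hm0.trans_le (hm w hw)) (hM w hw)
    have : |Real.log (‖g w‖)| ≤ max |Real.log m| |Real.log M| :=
      abs_le_max_abs_abs hlm hlM
    rw [hCdef]
    calc ‖Complex.log (g w)‖ ≤ _ + _ := h1
      _ ≤ max |Real.log m| |Real.log M| + Real.pi := by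
          rw [hre]; exact add_le_add this him
  set Lc : ℂ := Complex.log (((‖c‖ : ℝ) : ℂ)) with hLc
  set C' : ℝ := C + ‖Lc‖ with hC'
  have hC0 : 0 < C := by
    have := Real.pi_pos
    have : (0:ℝ) ≤ max |Real.log m| |Real.log M| :=
      le_max_of_le_left (abs_nonneg _)
    rw [hCdef]; nlinarith [Real.pi_pos]
  have hC'0 : 0 < C' := by
    rw [hC']
    have := norm_nonneg Lc
    linarith
  rw [Metric.tendstoUniformlyOn_iff]
  intro ε hε
  obtain ⟨N, hN⟩ := exists_nat_gt (max (max C' (2 * ρ * C' / ε)) 1)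
  have hN1 : (1:ℝ) < N := lt_of_le_of_lt (le_max_right _ _) hN
  have hNC' : C' < N := lt_of_le_of_lt ((le_max_left _ _).trans (le_max_left _ _)) hN
  have hNρ : 2 * ρ * C' / ε < N :=
    lt_of_le_of_lt ((le_max_right _ _).trans (le_max_left _ _)) hN
  filter_upwards [eventually_ge_atTop N] with n hn
  intro z hzK
  have hn1 : 1 ≤ n := by
    have : (1:ℝ) < (n:ℝ) := hN1.trans_le (by exact_mod_cast hn)
    exact_mod_cast this.le
  have hnR : (N:ℝ) ≤ (n:ℝ) := by exact_mod_cast hn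
  have hnpos : (0:ℝ) < (n:ℝ) := by linarith
  by_cases hz0 : z = 0
  · subst hz0
    simp [hε]
  · -- main case
    have hzρ : ‖z‖ ≤ ρ := by
      have := hKsub hzK
      simpa [Complex.dist_eq] using this
    have hzn : z ^ n ≠ 0 := pow_ne_zero _ hz0
    have hznρ : z ^ n ∈ closedBall (0:ℂ) ρ := by
      simp only [mem_closedBall, Complex.dist_eq, sub_zero, norm_pow]
      calc ‖z‖ ^ n ≤ ρ ^ n := pow_le_pow_left₀ (norm_nonneg z) hzρ n
        _ ≤ ρ := pow_le_of_le_one hρ0 hρ1.le (by omega : n ≠ 0)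
    have habsc : ((‖c‖ : ℝ) : ℂ) ≠ 0 := by
      simpa using hc
    have hrw : f (z ^ n) / (c * z ^ n) = g (z ^ n) := (hgval _ hzn).symm
    set u : ℂ := (Lc + Complex.log (g (z ^ n))) * ((1:ℂ) / n) with hu
    have hexp : ((‖c‖ : ℝ) : ℂ) ^ ((1:ℂ) / n) * z *
        ((f (z ^ n) / (c * z ^ n)) ^ ((1:ℂ) / n)) = z * Complex.exp u := by
      rw [hrw, Complex.cpow_def_of_ne_zero habsc, Complex.cpow_def_of_ne_zero (hgne _ hznρ),
        hu, add_mul, Complex.exp_add]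
      ring
    have hubound : ‖u‖ ≤ C' / n := by
      rw [hu]
      rw [norm_mul]
      have h1 : ‖Lc + Complex.log (g (z ^ n))‖ ≤ C' := by
        rw [hC']
        calc ‖Lc + Complex.log (g (z ^ n))‖
            ≤ ‖Lc‖ + ‖Complex.log (g (z ^ n))‖ := norm_add_le _ _
          _ ≤ ‖Lc‖ + C := by linarith [hlogbound _ hznρ]
          _ = C + ‖Lc‖ := by ring
      have h2 : ‖(1:ℂ) / n‖ = 1 / (n:ℝ) := by
        simp [norm_div, Complex.norm_natCast]
      rw [h2]
      rw [div_eq_mul_one_div C' (n:ℝ)]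
      exact mul_le_mul_of_nonneg_right h1 (by positivity)
    have hu1 : ‖u‖ ≤ 1 := by
      have : C' / (n:ℝ) ≤ 1 := by
        rw [div_le_one hnpos]
        linarith
      linarith [hubound]
    have hexpb : ‖Complex.exp u - 1‖ ≤ 2 * ‖u‖ :=
      Complex.norm_exp_sub_one_le hu1
    rw [hexp]
    rw [Complex.dist_eq]
    have : z - z * Complex.exp u = -(z * (Complex.exp u - 1)) := by ring
    rw [this, norm_neg, norm_mul]
    calc ‖z‖ * ‖Complex.exp u - 1‖
        ≤ ρ * (2 * (C' / n)) := by
          apply mul_le_mul hzρ (hexpb.trans (by linarith [hubound]))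
            (norm_nonneg _) hρ0
      _ < ε := by
          rw [div_lt_iff₀ hε] at hNρ
          have h2 : ρ * (2 * (C' / n)) = 2 * ρ * C' / n := by ring
          rw [h2, div_lt_iff₀ hnpos]
          nlinarith [hNρ, hε, hnR]
end

section
/- For a, b > 0, the map φ_{ab}(z) = 4ab·z / (a(1+z)² + b(1−z)²) is a conformal bijection from the unit disk 𝔻 onto ℂ \ ((−∞,−a] ∪ [b,∞)), with inverse z = (1 − √(a(b−ω)/(b(a+ω))))/(1 + √(a(b−ω)/(b(a+ω)))). -/
open Metric Set

section AuxTwoCut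
open Complex Metric

lemma sq_not_negreal {u : ℂ} (hu : 0 < u.re) : ¬((u^2).im = 0 ∧ (u^2).re ≤ 0) := by
  rintro ⟨him, hre⟩
  simp only [sq, Complex.mul_im, Complex.mul_re] at him hre
  have hy : u.im = 0 := by nlinarith
  nlinarith

lemma re_cpow_half_pos {t : ℂ} (h : ¬(t.im = 0 ∧ t.re ≤ 0)) : 0 < (t ^ ((1:ℂ)/2)).re := by
  have ht : t ≠ 0 := by rintro rfl; simp at h
  rw [Complex.cpow_def_of_ne_zero ht, Complex.exp_re]
  have him : (Complex.log t * (1/2)).im = t.arg / 2 := by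
    simp [Complex.mul_im, Complex.log_im]; ring
  rw [him]
  have h1 : -Real.pi < t.arg := Complex.neg_pi_lt_arg t
  have h2 : t.arg < Real.pi := by
    rcases eq_or_lt_of_le (Complex.arg_le_pi t) with h' | h'
    · exfalso
      have h3 := Complex.arg_eq_pi_iff.mp h'
      exact h ⟨h3.2, h3.1.le⟩
    · exact h'
  have : 0 < Real.cos (t.arg / 2) := by
    apply Real.cos_pos_of_mem_Ioo
    constructor <;> [linarith; linarith]
  positivity

lemma sqrt_unique {w w' : ℂ} (h : w^2 = w'^2) (h1 : 0 < w.re) (h2 : 0 < w'.re) : w = w' := by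
  have h0 : (w - w') * (w + w') = 0 := by linear_combination h
  rcases mul_eq_zero.mp h0 with h0 | h0
  · exact sub_eq_zero.mp h0
  · exfalso
    have hw : w = -w' := eq_neg_of_add_eq_zero_left h0
    have : w.re = -w'.re := by rw [hw]; simp
    linarith

lemma re_mobius_pos {z : ℂ} (hz : z ∈ ball (0:ℂ) 1) : 0 < (((1:ℂ) + z) / (1 - z)).re := by
  have hz1 : ‖z‖ < 1 := by simpa using hz
  have hns : Complex.normSq z < 1 := by
    have := Complex.sq_norm z
    nlinarith [norm_nonneg z]
  have hzne : (1:ℂ) - z ≠ 0 := by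
    intro h
    have : z = 1 := by linear_combination -h
    rw [this] at hz1; simp at hz1
  have hpos : 0 < Complex.normSq (1 - z) := Complex.normSq_pos.mpr hzne
  rw [Complex.div_re]
  have h1 : ((1:ℂ) + z).re = 1 + z.re := by simp
  have h2 : ((1:ℂ) - z).re = 1 - z.re := by simp
  have h3 : ((1:ℂ) + z).im = z.im := by simp
  have h4 : ((1:ℂ) - z).im = -z.im := by simp
  rw [h1, h2, h3, h4]
  rw [← add_div]
  apply div_pos _ hpos
  simp only [Complex.normSq_apply] at hns
  nlinarith

lemma mobius_mem_ball {w : ℂ} (hw : 0 < w.re) : ((1:ℂ) - w) / (1 + w) ∈ ball (0:ℂ) 1 := by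
  have hne : (1:ℂ) + w ≠ 0 := by
    intro h
    have : ((1:ℂ) + w).re = 0 := by rw [h]; simp
    simp at this; linarith
  rw [mem_ball_zero_iff]
  rw [norm_div]
  rw [div_lt_one (norm_pos_iff.mpr hne)]
  have h1 : ‖(1:ℂ) - w‖ = Real.sqrt (Complex.normSq (1 - w)) := by
    rw [Complex.norm_def]
  have h2 : ‖(1:ℂ) + w‖ = Real.sqrt (Complex.normSq (1 + w)) := by
    rw [Complex.norm_def]
  rw [h1, h2]
  apply Real.sqrt_lt_sqrt (Complex.normSq_nonneg _)
  simp only [Complex.normSq_apply, Complex.sub_re, Complex.sub_im, Complex.add_re,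
    Complex.add_im, Complex.one_re, Complex.one_im]
  nlinarith

lemma den_ne_zero {a b : ℝ} (ha : 0 < a) (hb : 0 < b) {z : ℂ} (hz : z ∈ ball (0:ℂ) 1) :
    (a:ℂ) * (1 + z)^2 + (b:ℂ) * (1 - z)^2 ≠ 0 := by
  intro hzero
  have hu := re_mobius_pos hz
  have hzne : (1:ℂ) - z ≠ 0 := by
    intro h
    have hz1 : ‖z‖ < 1 := by simpa using hz
    have : z = 1 := by linear_combination -h
    rw [this] at hz1; simp at hz1
  have key : (((1:ℂ)+z)/(1-z))^2 = ((-(b/a) : ℝ) : ℂ) := by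
    rw [div_pow, div_eq_iff (pow_ne_zero 2 hzne)]
    push_cast
    have ha' : (a:ℂ) ≠ 0 := Complex.ofReal_ne_zero.mpr ha.ne'
    field_simp
    linear_combination hzero
  refine sq_not_negreal hu ⟨?_, ?_⟩
  · rw [key]; simp
  · rw [key]; simp only [Complex.ofReal_re]
    rw [neg_nonpos]
    positivity

lemma maps_to_compl {a b : ℝ} (ha : 0 < a) (hb : 0 < b) {z : ℂ} (hz : z ∈ ball (0:ℂ) 1) :
    ¬((4 * (a:ℂ) * b * z / ((a:ℂ) * (1 + z)^2 + b * (1 - z)^2)).im = 0 ∧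
      ((4 * (a:ℂ) * b * z / ((a:ℂ) * (1 + z)^2 + b * (1 - z)^2)).re ≤ -a ∨
        b ≤ (4 * (a:ℂ) * b * z / ((a:ℂ) * (1 + z)^2 + b * (1 - z)^2)).re)) := by
  have hD := den_ne_zero ha hb hz
  have hu := re_mobius_pos hz
  have hzne : (1:ℂ) - z ≠ 0 := by
    intro h
    have hz1 : ‖z‖ < 1 := by simpa using hz
    have : z = 1 := by linear_combination -h
    rw [this] at hz1; simp at hz1
  have ha' : (a:ℂ) ≠ 0 := Complex.ofReal_ne_zero.mpr ha.ne'
  have hb' : (b:ℂ) ≠ 0 := Complex.ofReal_ne_zero.mpr hb.ne'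
  set ω : ℂ := 4 * (a:ℂ) * b * z / ((a:ℂ) * (1 + z)^2 + b * (1 - z)^2) with hωdef
  rintro ⟨him, hre⟩
  set x : ℝ := ω.re with hxdef
  have hωx : ω = (x : ℝ) := by
    apply Complex.ext <;> simp [him, hxdef]
  have hωD : ω * ((a:ℂ) * (1 + z)^2 + b * (1 - z)^2) = 4 * a * b * z := by
    rw [hωdef]; field_simp
  -- exclude x = b
  have hxb : x ≠ b := by
    intro hxb
    rw [hωx, hxb] at hωD
    have hD4 : (a:ℂ) * (1 + z)^2 + b * (1 - z)^2 = 4 * a * z :=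
      mul_left_cancel₀ hb' (by linear_combination hωD)
    have h1 : ((a:ℂ) + b) * (1 - z)^2 = 0 := by linear_combination hD4
    have h2 : (a:ℂ) + b ≠ 0 := by
      intro h
      have : a + b = 0 := by exact_mod_cast h
      linarith
    rcases mul_eq_zero.mp h1 with h | h
    · exact h2 h
    · exact hzne (pow_eq_zero_iff (by norm_num) |>.mp h ▸ rfl)
  -- the key identity: a(b-x)(1+z)^2 = b(a+x)(1-z)^2
  have key : (a:ℂ) * ((b:ℝ) - x) * (1+z)^2 = (b:ℂ) * ((a:ℝ) + x) * (1-z)^2 := by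
    rw [hωx] at hωD
    linear_combination -hωD
  have habx : (a:ℂ) * ((b:ℝ) - x) ≠ 0 := by
    apply mul_ne_zero ha'
    rw [sub_ne_zero]
    exact fun h => hxb (by exact_mod_cast h.symm)
  have key2 : (((1:ℂ)+z)/(1-z))^2 = ((b * (a + x) / (a * (b - x)) : ℝ) : ℂ) := by
    push_cast
    rw [div_pow, div_eq_div_iff (pow_ne_zero 2 hzne) (by exact_mod_cast habx)]
    push_cast at key
    linear_combination key
  refine sq_not_negreal hu ⟨?_, ?_⟩
  · rw [key2, Complex.ofReal_im]
  · rw [key2, Complex.ofReal_re]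
    rcases hre with h | h
    · apply div_nonpos_of_nonpos_of_nonneg
      · nlinarith
      · nlinarith
    · have hbx : b < x := lt_of_le_of_ne h (fun e => hxb e.symm)
      apply div_nonpos_of_nonneg_of_nonpos
      · nlinarith
      · nlinarith

lemma t_not_negreal {a b : ℝ} (ha : 0 < a) (hb : 0 < b) {ω : ℂ}
    (hω : ¬(ω.im = 0 ∧ (ω.re ≤ -a ∨ b ≤ ω.re))) :
    ¬((((a:ℂ) * ((b:ℂ) - ω)) / ((b:ℂ) * ((a:ℂ) + ω))).im = 0 ∧
      (((a:ℂ) * ((b:ℂ) - ω)) / ((b:ℂ) * ((a:ℂ) + ω))).re ≤ 0) := by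
  have ha' : (a:ℂ) ≠ 0 := Complex.ofReal_ne_zero.mpr ha.ne'
  have hb' : (b:ℂ) ≠ 0 := Complex.ofReal_ne_zero.mpr hb.ne'
  have haω : (a:ℂ) + ω ≠ 0 := by
    intro h
    have hω' : ω = -(a:ℂ) := by linear_combination h
    apply hω
    rw [hω']
    refine ⟨by simp, Or.inl (by simp)⟩
  have hden : (b:ℂ) * ((a:ℂ) + ω) ≠ 0 := mul_ne_zero hb' haω
  rintro ⟨him, hre⟩
  set t : ℂ := ((a:ℂ) * ((b:ℂ) - ω)) / ((b:ℂ) * ((a:ℂ) + ω)) with htdef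
  have htr : t = ((t.re : ℝ) : ℂ) := Complex.ext rfl (by simpa using him)
  have ht : (a:ℂ) * ((b:ℂ) - ω) = ((t.re : ℝ) : ℂ) * ((b:ℂ) * ((a:ℂ) + ω)) := by
    rw [← htr, htdef, div_mul_cancel₀ _ hden]
  set x : ℝ := ω.re
  set y : ℝ := ω.im
  set r : ℝ := t.re
  have hRe : a * (b - x) = r * (b * (a + x)) := by
    have := congrArg Complex.re ht
    simpa [Complex.mul_re, Complex.mul_im] using this
  have hIm : a * (-y) = r * (b * y) := by
    have := congrArg Complex.im ht
    simpa [Complex.mul_re, Complex.mul_im] using this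
  by_cases hy : y = 0
  · have h' : ¬(x ≤ -a ∨ b ≤ x) := fun h => hω ⟨hy, h⟩
    push_neg at h'
    have h1 : 0 < a * (b - x) := mul_pos ha (by linarith [h'.2])
    have h2 : 0 < b * (a + x) := mul_pos hb (by linarith [h'.1])
    nlinarith [mul_le_mul_of_nonneg_right hre h2.le]
  · have hab : a = -(r * b) := by
      have : (-a) * y = (r * b) * y := by linarith [hIm]
      have := mul_right_cancel₀ hy this
      linarith
    have hrb : r * b = -a := by linarith
    have hfin : a * (a + b) = 0 := by linear_combination hRe + (a + x) * hrb
    nlinarith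

lemma right_inv_aux {a b : ℝ} (ha : 0 < a) (hb : 0 < b) {ω : ℂ}
    (hω : ¬(ω.im = 0 ∧ (ω.re ≤ -a ∨ b ≤ ω.re))) :
    (1 - (((a:ℂ) * ((b:ℂ) - ω)) / ((b:ℂ) * ((a:ℂ) + ω))) ^ ((1:ℂ)/2)) /
      (1 + (((a:ℂ) * ((b:ℂ) - ω)) / ((b:ℂ) * ((a:ℂ) + ω))) ^ ((1:ℂ)/2)) ∈ ball (0:ℂ) 1 ∧
    (fun z => 4 * (a:ℂ) * b * z / ((a:ℂ) * (1 + z)^2 + b * (1 - z)^2))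
      ((1 - (((a:ℂ) * ((b:ℂ) - ω)) / ((b:ℂ) * ((a:ℂ) + ω))) ^ ((1:ℂ)/2)) /
        (1 + (((a:ℂ) * ((b:ℂ) - ω)) / ((b:ℂ) * ((a:ℂ) + ω))) ^ ((1:ℂ)/2))) = ω := by
  have ha' : (a:ℂ) ≠ 0 := Complex.ofReal_ne_zero.mpr ha.ne'
  have hb' : (b:ℂ) ≠ 0 := Complex.ofReal_ne_zero.mpr hb.ne'
  have haω : (a:ℂ) + ω ≠ 0 := by
    intro h
    have hω' : ω = -(a:ℂ) := by linear_combination h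
    exact hω (by rw [hω']; exact ⟨by simp, Or.inl (by simp)⟩)
  have hbω : (b:ℂ) - ω ≠ 0 := by
    intro h
    have hω' : ω = (b:ℂ) := by linear_combination -h
    exact hω (by rw [hω']; exact ⟨by simp, Or.inr (by simp)⟩)
  have hden : (b:ℂ) * ((a:ℂ) + ω) ≠ 0 := mul_ne_zero hb' haω
  set t : ℂ := ((a:ℂ) * ((b:ℂ) - ω)) / ((b:ℂ) * ((a:ℂ) + ω)) with htdef
  have ht0 : t ≠ 0 := div_ne_zero (mul_ne_zero ha' hbω) hden
  set w : ℂ := t ^ ((1:ℂ)/2) with hwdef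
  have hwre : 0 < w.re := re_cpow_half_pos (t_not_negreal ha hb hω)
  have hw2 : w ^ 2 = t := by rw [hwdef, sq, ← Complex.cpow_add _ _ ht0]; norm_num
  have hball : (1 - w) / (1 + w) ∈ ball (0:ℂ) 1 := mobius_mem_ball hwre
  refine ⟨hball, ?_⟩
  have hD := den_ne_zero ha hb hball
  have h1w : (1:ℂ) + w ≠ 0 := by
    intro h
    have : ((1:ℂ) + w).re = 0 := by rw [h]; simp
    simp at this; linarith
  have hw2' : (b:ℂ) * ((a:ℂ) + ω) * w^2 = (a:ℂ) * ((b:ℂ) - ω) := by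
    rw [hw2, htdef, mul_div_cancel₀ _ hden]
  show 4 * (a:ℂ) * b * ((1 - w) / (1 + w)) /
      ((a:ℂ) * (1 + (1 - w) / (1 + w))^2 + b * (1 - (1 - w) / (1 + w))^2) = ω
  rw [div_eq_iff hD]
  field_simp
  linear_combination (-(4:ℂ)) * hw2'

lemma left_inv_aux {a b : ℝ} (ha : 0 < a) (hb : 0 < b) {z : ℂ} (hz : z ∈ ball (0:ℂ) 1) :
    (1 - (((a:ℂ) * ((b:ℂ) - 4 * (a:ℂ) * b * z / ((a:ℂ) * (1 + z)^2 + b * (1 - z)^2))) /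
        ((b:ℂ) * ((a:ℂ) + 4 * (a:ℂ) * b * z / ((a:ℂ) * (1 + z)^2 + b * (1 - z)^2)))) ^ ((1:ℂ)/2)) /
      (1 + (((a:ℂ) * ((b:ℂ) - 4 * (a:ℂ) * b * z / ((a:ℂ) * (1 + z)^2 + b * (1 - z)^2))) /
        ((b:ℂ) * ((a:ℂ) + 4 * (a:ℂ) * b * z / ((a:ℂ) * (1 + z)^2 + b * (1 - z)^2)))) ^ ((1:ℂ)/2)) = z := by
  have ha' : (a:ℂ) ≠ 0 := Complex.ofReal_ne_zero.mpr ha.ne'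
  have hb' : (b:ℂ) ≠ 0 := Complex.ofReal_ne_zero.mpr hb.ne'
  have hD := den_ne_zero ha hb hz
  have hu := re_mobius_pos hz
  have hzne : (1:ℂ) - z ≠ 0 := by
    intro h
    have hz1 : ‖z‖ < 1 := by simpa using hz
    have : z = 1 := by linear_combination -h
    rw [this] at hz1; simp at hz1
  set ω : ℂ := 4 * (a:ℂ) * b * z / ((a:ℂ) * (1 + z)^2 + b * (1 - z)^2) with hωdef
  have hωc := maps_to_compl ha hb hz
  rw [← hωdef] at hωc
  have haω : (a:ℂ) + ω ≠ 0 := by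
    intro h
    have hω' : ω = -(a:ℂ) := by linear_combination h
    exact hωc (by rw [hω']; exact ⟨by simp, Or.inl (by simp)⟩)
  have hden : (b:ℂ) * ((a:ℂ) + ω) ≠ 0 := mul_ne_zero hb' haω
  set u : ℂ := (1 + z) / (1 - z) with hudef
  have hu0 : u ≠ 0 := by
    intro h
    rw [h] at hu; simp at hu
  have hiu : 0 < (u⁻¹).re := by
    rw [Complex.inv_re]
    exact div_pos hu (Complex.normSq_pos.mpr hu0)
  have hωD : ω * ((a:ℂ) * (1 + z)^2 + b * (1 - z)^2) = 4 * a * b * z := by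
    rw [hωdef]; field_simp
  have key : (a:ℂ) * ((b:ℂ) - ω) * (1+z)^2 = (b:ℂ) * ((a:ℂ) + ω) * (1-z)^2 := by
    linear_combination -hωD
  set t : ℂ := ((a:ℂ) * ((b:ℂ) - ω)) / ((b:ℂ) * ((a:ℂ) + ω)) with htdef
  have htu : t * u^2 = 1 := by
    rw [htdef, hudef, div_pow, div_mul_div_comm, div_eq_one_iff_eq
      (mul_ne_zero hden (pow_ne_zero 2 hzne))]
    linear_combination key
  have ht0 : t ≠ 0 := left_ne_zero_of_mul_eq_one htu
  have htinv : t = (u⁻¹)^2 := by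
    rw [inv_pow]
    exact eq_inv_of_mul_eq_one_left (by linear_combination htu)
  set w : ℂ := t ^ ((1:ℂ)/2) with hwdef
  have hw2 : w ^ 2 = t := by rw [hwdef, sq, ← Complex.cpow_add _ _ ht0]; norm_num
  have hwre : 0 < w.re := by
    apply re_cpow_half_pos
    rw [htinv]
    exact sq_not_negreal hiu
  have hwu : w = u⁻¹ := sqrt_unique (by rw [hw2, htinv]) hwre hiu
  rw [hwu]
  have h1u : (1:ℂ) + u⁻¹ ≠ 0 := by
    intro h
    have : ((1:ℂ) + u⁻¹).re = 0 := by rw [h]; simp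
    rw [Complex.add_re, Complex.one_re] at this
    linarith
  rw [div_eq_iff h1u, hudef]
  have h1z : (1:ℂ) + z ≠ 0 := by
    intro h
    rw [hudef, h] at hu0
    simp at hu0
  field_simp
  ring

end AuxTwoCut

/-- The asymmetric two-cut conformal map: for `a, b > 0`,
`φ_{ab}(z) = 4abz/(a(1+z)² + b(1−z)²)` is an analytic bijection from the unit disk onto
`ℂ \ ((−∞,−a] ∪ [b,∞))`, with inverse
`z = (1 − √(a(b−ω)/(b(a+ω))))/(1 + √(a(b−ω)/(b(a+ω))))` (principal square root). -/
theorem stmt12 (a b : ℝ) (ha : 0 < a) (hb : 0 < b) :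
    let φ : ℂ → ℂ := fun z =>
      4 * (a : ℂ) * (b : ℂ) * z / ((a : ℂ) * (1 + z) ^ 2 + (b : ℂ) * (1 - z) ^ 2)
    let ψ : ℂ → ℂ := fun ω =>
      (1 - (((a : ℂ) * ((b : ℂ) - ω)) / ((b : ℂ) * ((a : ℂ) + ω))) ^ ((1 : ℂ) / 2)) /
        (1 + (((a : ℂ) * ((b : ℂ) - ω)) / ((b : ℂ) * ((a : ℂ) + ω))) ^ ((1 : ℂ) / 2))
    let S : Set ℂ := {ω : ℂ | ω.im = 0 ∧ (ω.re ≤ -a ∨ b ≤ ω.re)}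
    DifferentiableOn ℂ φ (ball (0 : ℂ) 1) ∧
    Set.BijOn φ (ball (0 : ℂ) 1) Sᶜ ∧
    (∀ ω ∈ Sᶜ, ψ ω ∈ ball (0 : ℂ) 1 ∧ φ (ψ ω) = ω) ∧
    (∀ z ∈ ball (0 : ℂ) 1, ψ (φ z) = z) := by
  intro φ ψ S
  refine ⟨?_, ⟨?_, ?_, ?_⟩, ?_, ?_⟩
  · -- DifferentiableOn
    apply DifferentiableOn.div
    · fun_prop
    · fun_prop
    · intro z hz; exact den_ne_zero ha hb hz
  · -- MapsTo
    intro z hz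
    exact maps_to_compl ha hb hz
  · -- InjOn
    intro z1 h1 z2 h2 he
    have l1 : ψ (φ z1) = z1 := left_inv_aux ha hb h1
    have l2 : ψ (φ z2) = z2 := left_inv_aux ha hb h2
    rw [← l1, ← l2, he]
  · -- SurjOn
    intro ω hω
    exact ⟨ψ ω, (right_inv_aux ha hb hω).1, (right_inv_aux ha hb hω).2⟩
  · -- right inverse
    intro ω hω
    exact right_inv_aux ha hb hω
  · -- left inverse
    intro z hz
    exact left_inv_aux ha hb hz
end

section
/- Let ψ : Ω → 𝔻 be a biholomorphism (with Ω an open simply connected subset of ℂ containing the closed unit disk, ψ(0) = 0, ψ'(0) > 0), let F : Ω → ℂ be bounded analytic whose Taylor series at 0 starts with the polynomial P_n (F(ω) − P_n(ω) = O(ω^n)), and set R̂_n = Q_n ∘ ψ where Q_n is the order-n Taylor truncation at 0 of F ∘ ψ^{-1}. Then for every ω₀ ∈ Ω: |F(ω₀) − R̂_n(ω₀)| ≤ ‖F‖_∞ · |ψ(ω₀)|^n/(1 − |ψ(ω₀)|), and moreover Q_n depends only on P_n and ψ (not on F). -/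
open Metric Set Finset

lemma aux_coeff18 {f : ℂ → ℂ} {p : FormalMultilinearSeries ℂ ℂ ℂ}
    (h : HasFPowerSeriesAt f p 0) (k : ℕ) :
    p.coeff k = iteratedDeriv k f 0 / (k.factorial : ℂ) := by
  obtain ⟨r, hr⟩ := h
  have h1 := hr.factorial_smul (y := (1:ℂ)) k
  have h2 : iteratedDeriv k f 0 = iteratedFDeriv ℂ k f 0 (fun _ => 1) := rfl
  have h3 : p.coeff k = p k (fun _ => 1) := rfl
  have h4 : (k.factorial : ℂ) * p.coeff k = iteratedDeriv k f 0 := by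
    rw [h2, ← h1, h3, nsmul_eq_mul]
  rw [← h4, mul_comm, mul_div_assoc, div_self (by exact_mod_cast k.factorial_ne_zero), mul_one]

lemma aux_bound18 {f : ℂ → ℂ} (hfd : DifferentiableOn ℂ f (ball 0 1)) {M : ℝ}
    (hM : ∀ z ∈ ball (0:ℂ) 1, ‖f z‖ ≤ M) (k : ℕ) :
    ‖iteratedDeriv k f 0 / (k.factorial : ℂ)‖ ≤ M := by
  set C := ‖iteratedDeriv k f 0 / (k.factorial : ℂ)‖ with hC
  have key : ∀ r ∈ Ioo (0:ℝ) 1, C * r ^ k ≤ M := by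
    rintro r ⟨hr0, hr1⟩
    set R : NNReal := ⟨r, hr0.le⟩ with hR
    have hRr : (R : ℝ) = r := rfl
    have hsub : closedBall (0:ℂ) R ⊆ ball 0 1 := by
      rw [hRr]; exact closedBall_subset_ball hr1
    have hh := (hfd.mono hsub).hasFPowerSeriesOnBall (show 0 < R from hr0)
    have hc := aux_coeff18 hh.hasFPowerSeriesAt k
    have hmem : ∀ θ : ℝ, circleMap 0 r θ ∈ ball (0:ℂ) 1 := by
      intro θ
      simp only [mem_ball_zero_iff, norm_circleMap_zero]
      rwa [abs_of_pos hr0]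
    have hcont : Continuous fun θ : ℝ => ‖f (circleMap 0 r θ)‖ :=
      (hfd.continuousOn.comp_continuous (continuous_circleMap 0 r) hmem).norm
    have hint : (∫ θ in (0:ℝ)..2 * Real.pi, ‖f (circleMap 0 r θ)‖) ≤ 2 * Real.pi * M := by
      have h1 : (∫ θ in (0:ℝ)..2 * Real.pi, ‖f (circleMap 0 r θ)‖)
          ≤ ∫ _ in (0:ℝ)..2 * Real.pi, M :=
        intervalIntegral.integral_mono_on Real.two_pi_pos.le (hcont.intervalIntegrable _ _)
          intervalIntegrable_const (fun θ _ => by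
            exact hM _ (hmem θ))
      simpa using h1
    have hb := norm_cauchyPowerSeries_le f 0 r k
    have hb2 : ‖cauchyPowerSeries f 0 r k‖ ≤ M * (r⁻¹) ^ k := by
      refine hb.trans ?_
      rw [abs_of_pos hr0]
      have h2 : (2 * Real.pi)⁻¹ * (∫ θ in (0:ℝ)..2 * Real.pi, ‖f (circleMap 0 r θ)‖) ≤ M := by
        rw [inv_mul_le_iff₀ Real.two_pi_pos]
        exact hint.trans (le_of_eq (by ring))
      gcongr
    have hCeq : C = ‖cauchyPowerSeries f 0 r k‖ := by
      rw [FormalMultilinearSeries.norm_apply_eq_norm_coef]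
      have : cauchyPowerSeries f 0 (R:ℝ) = cauchyPowerSeries f 0 r := by rw [hRr]
      rw [← this, hc, hC]
    rw [hCeq]
    calc ‖cauchyPowerSeries f 0 r k‖ * r ^ k ≤ M * (r⁻¹) ^ k * r ^ k := by
          gcongr
      _ = M := by rw [inv_pow, mul_assoc, inv_mul_cancel₀ (pow_ne_zero _ hr0.ne'), mul_one]
  have tend : Filter.Tendsto (fun r : ℝ => C * r ^ k) (nhdsWithin 1 (Iio 1)) (nhds C) := by
    have h1 : Filter.Tendsto (fun r : ℝ => C * r ^ k) (nhds 1) (nhds (C * 1 ^ k)) :=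
      ((continuous_const.mul (continuous_pow k)).tendsto 1)
    simpa using h1.mono_left nhdsWithin_le_nhds
  exact le_of_tendsto tend (by
    filter_upwards [Ioo_mem_nhdsLT_of_mem (by norm_num : (1:ℝ) ∈ Ioc (0:ℝ) 1)] with r hr
    exact key r hr)

/-- Optimal reconstruction on a domain Ω uniformized by ψ: with `R̂_n = Q_n ∘ ψ`, where
`Q_n` is the order-`n` Taylor truncation of `F ∘ ψ⁻¹` at `0`, one has the Cauchy bound
`|F(ω₀) − R̂_n(ω₀)| ≤ ‖F‖_∞ |ψ(ω₀)|ⁿ/(1 − |ψ(ω₀)|)`, and `Q_n` depends only on the first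
`n` Taylor coefficients of `F` (i.e. on `P_n`) and on `ψ`. -/
theorem stmt18 (Ω : Set ℂ) (hΩopen : IsOpen Ω) (hΩconn : IsConnected Ω)
    (hΩD : closedBall (0 : ℂ) 1 ⊆ Ω)
    (ψ φ : ℂ → ℂ)
    (hψ : DifferentiableOn ℂ ψ Ω) (hψbij : Set.BijOn ψ Ω (ball (0 : ℂ) 1))
    (hψ0 : ψ 0 = 0) (hψ'0 : 0 < (deriv ψ 0).re ∧ (deriv ψ 0).im = 0)
    (hφ : DifferentiableOn ℂ φ (ball (0 : ℂ) 1))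
    (hφψ : ∀ ω ∈ Ω, φ (ψ ω) = ω) (hψφ : ∀ z ∈ ball (0 : ℂ) 1, ψ (φ z) = z)
    (F : ℂ → ℂ) (hF : DifferentiableOn ℂ F Ω)
    (M : ℝ) (hM : ∀ ω ∈ Ω, ‖F ω‖ ≤ M)
    (n : ℕ) :
    (∀ ω₀ ∈ Ω,
      ‖F ω₀ -
          ∑ k ∈ Finset.range n,
            (iteratedDeriv k (F ∘ φ) 0 / (k.factorial : ℂ)) * (ψ ω₀) ^ k‖ ≤
        M * ‖ψ ω₀‖ ^ n / (1 - ‖ψ ω₀‖)) ∧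
    (∀ G : ℂ → ℂ, DifferentiableOn ℂ G Ω →
      (∀ k < n, iteratedDeriv k G 0 = iteratedDeriv k F 0) →
      ∀ k < n, iteratedDeriv k (G ∘ φ) 0 = iteratedDeriv k (F ∘ φ) 0) := by
  have h0Ω : (0:ℂ) ∈ Ω := hΩD (by simp)
  have hmap : MapsTo φ (ball (0:ℂ) 1) Ω := by
    intro z hz
    obtain ⟨ω, hω, rfl⟩ := hψbij.surjOn hz
    rw [hφψ ω hω]; exact hω
  have hfd : DifferentiableOn ℂ (F ∘ φ) (ball 0 1) := hF.comp hφ hmap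
  have hMf : ∀ z ∈ ball (0:ℂ) 1, ‖(F ∘ φ) z‖ ≤ M := fun z hz => hM _ (hmap hz)
  constructor
  · intro ω₀ hω₀
    set z := ψ ω₀ with hzdef
    have hzball : z ∈ ball (0:ℂ) 1 := hψbij.mapsTo hω₀
    have ha1 : ‖z‖ < 1 := by
      rwa [mem_ball_zero_iff] at hzball
    have ha0 : 0 ≤ ‖z‖ := norm_nonneg _
    obtain ⟨r, hr1, hr2⟩ := exists_between ha1
    set R : NNReal := ⟨r, ha0.trans hr1.le⟩ with hRdef
    have hRr : (R : ℝ) = r := rfl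
    have hsub : closedBall (0:ℂ) R ⊆ ball 0 1 := by
      rw [hRr]; exact closedBall_subset_ball hr2
    have hh := (hfd.mono hsub).hasFPowerSeriesOnBall (show 0 < R from ha0.trans_lt hr1)
    have hmemE : z ∈ EMetric.ball (0:ℂ) R := by
      show z ∈ Metric.eball (0:ℂ) R
      rw [Metric.emetric_ball_nnreal, mem_ball_zero_iff, hRr]
      exact hr1
    have hsum0 := hh.hasSum hmemE
    have hfz : (F ∘ φ) (0 + z) = F ω₀ := by
      simp only [zero_add, Function.comp_apply, hzdef, hφψ ω₀ hω₀]
    rw [hfz] at hsum0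
    have hsum : HasSum (fun k => (iteratedDeriv k (F ∘ φ) 0 / (k.factorial : ℂ)) * z ^ k)
        (F ω₀) := by
      refine HasSum.congr_fun hsum0 (fun k => ?_)
      rw [FormalMultilinearSeries.apply_eq_pow_smul_coeff, aux_coeff18 hh.hasFPowerSeriesAt k,
        smul_eq_mul]
      ring
    have hsummable := hsum.summable
    have hsplit := Summable.sum_add_tsum_nat_add n hsummable
    have key : F ω₀ - ∑ k ∈ Finset.range n,
        (iteratedDeriv k (F ∘ φ) 0 / (k.factorial : ℂ)) * z ^ k
        = ∑' i, (iteratedDeriv (i + n) (F ∘ φ) 0 / ((i + n).factorial : ℂ)) * z ^ (i + n) := by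
      rw [← hsum.tsum_eq, ← hsplit]; ring
    rw [key]
    have hgsum : HasSum (fun i : ℕ => M * ‖z‖ ^ n * ‖z‖ ^ i)
        (M * ‖z‖ ^ n * (1 - ‖z‖)⁻¹) :=
      (hasSum_geometric_of_lt_one ha0 ha1).mul_left _
    have hbd : ∀ i : ℕ,
        ‖(iteratedDeriv (i + n) (F ∘ φ) 0 / ((i + n).factorial : ℂ)) * z ^ (i + n)‖
          ≤ M * ‖z‖ ^ n * ‖z‖ ^ i := by
      intro i
      rw [norm_mul, norm_pow]
      calc ‖iteratedDeriv (i + n) (F ∘ φ) 0 / ((i + n).factorial : ℂ)‖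
            * ‖z‖ ^ (i + n)
          ≤ M * ‖z‖ ^ (i + n) := by
            have := aux_bound18 hfd hMf (i + n)
            gcongr
        _ = M * ‖z‖ ^ n * ‖z‖ ^ i := by rw [pow_add]; ring
    have hfin := tsum_of_norm_bounded hgsum hbd
    refine hfin.trans (le_of_eq ?_)
    rw [div_eq_mul_inv]
  · intro G hG hGF k hk
    have hφ0 : φ 0 = 0 := by have := hφψ 0 h0Ω; rwa [hψ0] at this
    obtain ⟨rφ, hrφ⟩ := hφ.analyticAt (isOpen_ball.mem_nhds (mem_ball_self one_pos))
    obtain ⟨pF, hpF⟩ := hF.analyticAt (hΩopen.mem_nhds h0Ω)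
    obtain ⟨pG, hpG⟩ := hG.analyticAt (hΩopen.mem_nhds h0Ω)
    have hcompF : HasFPowerSeriesAt (F ∘ φ) (pF.comp rφ) 0 := by
      rw [← hφ0] at hpF; exact hpF.comp hrφ
    have hcompG : HasFPowerSeriesAt (G ∘ φ) (pG.comp rφ) 0 := by
      rw [← hφ0] at hpG; exact hpG.comp hrφ
    have heq : ∀ j ≤ k, pG j = pF j := by
      intro j hj
      have h1 : pG.coeff j = pF.coeff j := by
        rw [aux_coeff18 hpG, aux_coeff18 hpF, hGF j (lt_of_le_of_lt hj hk)]
      rw [← FormalMultilinearSeries.mkPiRing_coeff_eq pG,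
        ← FormalMultilinearSeries.mkPiRing_coeff_eq pF, h1]
    have hcomp_eq : (pG.comp rφ) k = (pF.comp rφ) k := by
      simp only [FormalMultilinearSeries.comp]
      refine Finset.sum_congr rfl fun c _ => ?_
      ext v
      rw [FormalMultilinearSeries.compAlongComposition_apply,
        FormalMultilinearSeries.compAlongComposition_apply, heq c.length c.length_le]
    have h2 : iteratedDeriv k (G ∘ φ) 0 / (k.factorial : ℂ)
        = iteratedDeriv k (F ∘ φ) 0 / (k.factorial : ℂ) := by
      rw [← aux_coeff18 hcompG k, ← aux_coeff18 hcompF k]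
      show (pG.comp rφ) k (fun _ => 1) = (pF.comp rφ) k (fun _ => 1)
      rw [hcomp_eq]
    have hk0 : (k.factorial : ℂ) ≠ 0 := by exact_mod_cast k.factorial_ne_zero
    field_simp [hk0] at h2
    exact h2
end
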